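/- Let u¹, u² ∈ ℝ with u² ≠ 0 and D := (u²)² − u¹u² > 0; set R = √D, λ¹ = 2u² − u¹ + 2R, λ² = 2u² − u¹ − 2R, and 𝒥 = [[−1 − u²/R, 2 + (2u² − u¹)/R],[−1 + u²/R, 2 − (2u² − u¹)/R]]. Define f¹, f² as the diagonal entries of 𝒥 g₁ 𝒥ᵀ with g₁ = [[−2u², −u²],[−u², 0]], and assume f¹ ≠ 0 and f² ≠ 0. Define the matrices A₁ = 𝒥[[0, −u²/2],[u²/2, 0]]𝒥ᵀ, A₂ = 𝒥[[0, u¹u²/2],[−u¹u²/2, 0]]𝒥ᵀ, B₁ = 𝒥[[−u²/3, −u²/6],[−u²/6, 0]]𝒥ᵀ, B₂ = 𝒥[[0, u¹u²/6],[u¹u²/6, (u²)²/3]]𝒥ᵀ. Then for each i ∈ {1,2}, with j the other index, the central invariant cᵢ = (1/(3(fⁱ)²)) · ( (B₂)ᵢᵢ − λⁱ(B₁)ᵢᵢ + ((A₂)ⱼᵢ − λⁱ(A₁)ⱼᵢ)² / (fʲ(λʲ − λⁱ)) ) equals 1/24. That is, both central invariants of the bihamiltonian structure (𝒫₁, 𝒫₂)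 of the Ablowitz–Ladik hierarchy are equal to 1/24. -/

import Mathlib

set_option maxHeartbeats 2000000


/-- Both central invariants of the bihamiltonian structure
`(𝒫₁, 𝒫₂)` of the Ablowitz–Ladik hierarchy are equal to `1/24`. -/
theorem central_invariants_P1_P2_eq_one_div_24
    (u1 u2 : ℝ) (hu2 : u2 ≠ 0) (hD : u2 ^ 2 - u1 * u2 > 0)
    (R : ℝ) (hR : R = Real.sqrt (u2 ^ 2 - u1 * u2))
    (lam1 lam2 : ℝ)
    (hlam1 : lam1 = 2 * u2 - u1 + 2 * R) (hlam2 : lam2 = 2 * u2 - u1 - 2 * R)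
    (g1 J : Matrix (Fin 2) (Fin 2) ℝ)
    (hg1 : g1 = !![-2 * u2, -u2; -u2, 0])
    (hJ : J = !![-1 - u2 / R, 2 + (2 * u2 - u1) / R;
                 -1 + u2 / R, 2 - (2 * u2 - u1) / R])
    (f1 f2 : ℝ)
    (hf1 : f1 = (J * g1 * J.transpose) 0 0) (hf2 : f2 = (J * g1 * J.transpose) 1 1)
    (hf1ne : f1 ≠ 0) (hf2ne : f2 ≠ 0)
    (A1 A2 B1 B2 : Matrix (Fin 2) (Fin 2) ℝ)
    (hA1 : A1 = J * !![0, -u2 / 2; u2 / 2, 0] * J.transpose)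
    (hA2 : A2 = J * !![0, u1 * u2 / 2; -u1 * u2 / 2, 0] * J.transpose)
    (hB1 : B1 = J * !![-u2 / 3, -u2 / 6; -u2 / 6, 0] * J.transpose)
    (hB2 : B2 = J * !![0, u1 * u2 / 6; u1 * u2 / 6, u2 ^ 2 / 3] * J.transpose) :
    (1 / (3 * f1 ^ 2)) *
        (B2 0 0 - lam1 * B1 0 0 + (A2 1 0 - lam1 * A1 1 0) ^ 2 / (f2 * (lam2 - lam1))) =
      1 / 24 ∧
    (1 / (3 * f2 ^ 2)) *
        (B2 1 1 - lam2 * B1 1 1 + (A2 0 1 - lam2 * A1 0 1) ^ 2 / (f1 * (lam1 - lam2))) =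
      1 / 24 := by
  have hRpos : R > 0 := hR ▸ Real.sqrt_pos.mpr hD
  have hRne : R ≠ 0 := ne_of_gt hRpos
  have hR2 : R ^ 2 = u2 ^ 2 - u1 * u2 := by rw [hR, Real.sq_sqrt hD.le]
  have hu1 : u1 = (u2 ^ 2 - R ^ 2) / u2 := by field_simp; linarith [hR2]
  -- explicit values of f1, f2 (using R^2 = u2^2 - u1*u2)
  have ef1 : f1 = 2 * (u2 + R) ^ 2 / R := by
    rw [hf1, hg1, hJ]
    simp only [Matrix.mul_apply, Matrix.transpose_apply, Fin.sum_univ_two,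
      Matrix.cons_val', Matrix.cons_val_zero, Matrix.cons_val_one, Matrix.head_cons,
      Matrix.empty_val', Matrix.cons_val_fin_one, Matrix.head_fin_const, Matrix.of_apply]
    field_simp
    linear_combination (-2 * (R + u2)) * hR2
  have ef2 : f2 = -(2 * (u2 - R) ^ 2) / R := by
    rw [hf2, hg1, hJ]
    simp only [Matrix.mul_apply, Matrix.transpose_apply, Fin.sum_univ_two,
      Matrix.cons_val', Matrix.cons_val_zero, Matrix.cons_val_one, Matrix.head_cons,
      Matrix.empty_val', Matrix.cons_val_fin_one, Matrix.head_fin_const, Matrix.of_apply]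
    field_simp
    linear_combination (2 * (R - u2)) * hR2
  have hs : u2 + R ≠ 0 := by
    intro h
    apply hf1ne
    rw [ef1, h]
    simp
  have hd : u2 - R ≠ 0 := by
    intro h
    apply hf2ne
    rw [ef2, h]
    simp
  subst hlam1 hlam2 hA1 hA2 hB1 hB2 hg1 hJ
  rw [ef1, ef2]
  simp only [Matrix.mul_apply, Matrix.transpose_apply, Fin.sum_univ_two,
    Matrix.cons_val', Matrix.cons_val_zero, Matrix.cons_val_one, Matrix.head_cons,
    Matrix.empty_val', Matrix.cons_val_fin_one, Matrix.head_fin_const, Matrix.of_apply]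
  rw [hu1]
  have hDm : R ^ 17 * u2 ^ 13 * 2048 - R ^ 18 * u2 ^ 12 * 4096 + R ^ 19 * u2 ^ 11 * 2048 ≠ 0 := by
    have h : R ^ 17 * u2 ^ 13 * 2048 - R ^ 18 * u2 ^ 12 * 4096 + R ^ 19 * u2 ^ 11 * 2048
        = 2048 * R ^ 17 * u2 ^ 11 * (u2 - R) ^ 2 := by ring
    rw [h]
    exact mul_ne_zero (mul_ne_zero (mul_ne_zero (by norm_num) (pow_ne_zero _ hRne))
      (pow_ne_zero _ hu2)) (pow_ne_zero _ hd)
  have hDp : R ^ 17 * u2 ^ 13 * 2048 + R ^ 18 * u2 ^ 12 * 4096 + R ^ 19 * u2 ^ 11 * 2048 ≠ 0 := by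
    have h : R ^ 17 * u2 ^ 13 * 2048 + R ^ 18 * u2 ^ 12 * 4096 + R ^ 19 * u2 ^ 11 * 2048
        = 2048 * R ^ 17 * u2 ^ 11 * (u2 + R) ^ 2 := by ring
    rw [h]
    exact mul_ne_zero (mul_ne_zero (mul_ne_zero (by norm_num) (pow_ne_zero _ hRne))
      (pow_ne_zero _ hu2)) (pow_ne_zero _ hs)
  constructor
  · field_simp [hs, hd]
    have ht := mul_inv_cancel₀ hDm
    linear_combination (u2 ^ 5 * R ^ 7 * 1728 + u2 ^ 6 * R ^ 6 * 3456 - u2 ^ 7 * R ^ 5 * 1728 -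
      u2 ^ 8 * R ^ 4 * 6912 - u2 ^ 9 * R ^ 3 * 1728 + u2 ^ 10 * R ^ 2 * 3456 + u2 ^ 11 * R * 1728) *
      mul_inv_cancel₀ (mul_ne_zero hu2 hRne)
  · field_simp [hs, hd]
    have ht := mul_inv_cancel₀ hDp
    linear_combination (0 : ℝ) * ht
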